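/- Let H be a real Hilbert space, D = D(c,r) an open ball of radius r, P ⊆ H a set, and z ∈ conv(P ∩ D) with dist(z,P) ≤ α·r for some 0 ≤ α < 1. Then dist(z, P ∩ D) ≤ √(2α - α²)·r. -/

import Mathlib

open scoped RealInnerProductSpace


theorem stmt5 {H : Type*} [NormedAddCommGroup H] [InnerProductSpace ℝ H]
    (P : Set H) (c z : H) (r α : ℝ) (hr : 0 < r) (hα0 : 0 ≤ α) (hα1 : α < 1)
    (hz : z ∈ convexHull ℝ (P ∩ Metric.ball c r))
    (hdist : Metric.infDist z P ≤ α * r) :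
    Metric.infDist z (P ∩ Metric.ball c r) ≤ Real.sqrt (2 * α - α ^ 2) * r := by
  have hSne : (P ∩ Metric.ball c r).Nonempty := by
    by_contra h
    rw [Set.not_nonempty_iff_eq_empty] at h
    rw [h, convexHull_empty] at hz
    exact hz
  have h1α : 0 < 1 - α := by linarith
  refine le_of_forall_pos_le_add fun ε hε => ?_
  set ε' := min ε (min (ε ^ 2 / (2 * r)) ((1 - α) * r)) with hε'def
  have hε'pos : 0 < ε' := lt_min hε (lt_min (by positivity) (by positivity))
  have hε'ε : ε' ≤ ε := min_le_left _ _
  have h1 : ε' ≤ ε ^ 2 / (2 * r) := le_trans (min_le_right _ _) (min_le_left _ _)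
  have h2 : ε' ≤ (1 - α) * r := le_trans (min_le_right _ _) (min_le_right _ _)
  have h2r : 2 * r * ε' ≤ ε ^ 2 := by
    have := (le_div_iff₀ (by positivity : (0:ℝ) < 2 * r)).1 h1
    linarith
  obtain ⟨p, hpP, hpz⟩ : ∃ p ∈ P, dist z p < α * r + ε' := by
    have hPne : P.Nonempty := ⟨hSne.choose, hSne.choose_spec.1⟩
    exact (Metric.infDist_lt_iff hPne).1 (lt_of_le_of_lt hdist (by linarith))
  by_cases hpD : p ∈ Metric.ball c r
  · have hle : Metric.infDist z (P ∩ Metric.ball c r) ≤ dist z p :=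
      Metric.infDist_le_dist_of_mem ⟨hpP, hpD⟩
    have hαs : α ≤ Real.sqrt (2 * α - α ^ 2) := by
      calc α = Real.sqrt (α ^ 2) := (Real.sqrt_sq hα0).symm
        _ ≤ Real.sqrt (2 * α - α ^ 2) := Real.sqrt_le_sqrt (by nlinarith)
    nlinarith [mul_le_mul_of_nonneg_right hαs hr.le]
  · have hpc : r ≤ dist p c := by
      simpa [Metric.mem_ball, not_lt] using hpD
    have hzc : (1 - α) * r - ε' ≤ ‖z - c‖ := by
      have ht := dist_triangle p z c
      have : dist p z = dist z p := dist_comm p z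
      have : dist z c = ‖z - c‖ := dist_eq_norm z c
      rw [dist_comm p z] at ht
      rw [← dist_eq_norm]
      linarith
    obtain ⟨q, hqS, hq⟩ : ∃ q ∈ P ∩ Metric.ball c r, (inner ℝ z (z - c) : ℝ) ≤ inner ℝ q (z - c) := by
      by_contra h
      push_neg at h
      have hconv : Convex ℝ {x : H | (inner ℝ x (z - c) : ℝ) < inner ℝ z (z - c)} :=
        convex_halfSpace_lt
          ⟨fun a b => inner_add_left a b (z - c), fun t a => real_inner_smul_left a (z - c) t⟩ _
      have hmem := convexHull_min (fun x hx => h x hx) hconv hz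
      exact lt_irrefl ((inner ℝ z (z - c) : ℝ)) hmem
    have hqc : ‖q - c‖ < r := by
      have := Metric.mem_ball.1 hqS.2
      rwa [dist_eq_norm] at this
    have hkey : ‖q - z‖ ^ 2 ≤ r ^ 2 - ((1 - α) * r - ε') ^ 2 := by
      have expand : ‖q - c‖ ^ 2 = ‖q - z‖ ^ 2 + 2 * (inner ℝ (q - z) (z - c) : ℝ) + ‖z - c‖ ^ 2 := by
        have := norm_add_sq_real (q - z) (z - c)
        simpa [sub_add_sub_cancel] using this
      have hinner : (0:ℝ) ≤ inner ℝ (q - z) (z - c) := by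
        rw [inner_sub_left]; linarith
      have hzc2 : ((1 - α) * r - ε') ^ 2 ≤ ‖z - c‖ ^ 2 := by
        apply pow_le_pow_left₀ (by linarith) hzc
      nlinarith [norm_nonneg (q - c)]
    have hdq : dist z q ≤ Real.sqrt (2 * α - α ^ 2) * r + ε := by
      have hb : 0 ≤ Real.sqrt (2 * α - α ^ 2) * r + ε := by positivity
      have hsq : ‖q - z‖ ^ 2 ≤ (Real.sqrt (2 * α - α ^ 2) * r + ε) ^ 2 := by
        have hs : Real.sqrt (2 * α - α ^ 2) ^ 2 = 2 * α - α ^ 2 :=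
          Real.sq_sqrt (by nlinarith)
        nlinarith [sq_nonneg ε', mul_nonneg hr.le hε'pos.le, mul_nonneg (mul_nonneg hα0 hr.le) hε'pos.le, mul_nonneg (Real.sqrt_nonneg (2 * α - α ^ 2)) (mul_nonneg hr.le hε.le)]
      have hle := Real.sqrt_le_sqrt hsq
      rw [Real.sqrt_sq (norm_nonneg _), Real.sqrt_sq hb] at hle
      rw [dist_eq_norm, ← norm_neg, neg_sub]
      exact hle
    exact le_trans (Metric.infDist_le_dist_of_mem hqS) hdq
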